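/- For any positive integers a ≥ 2 and n ≥ 2 with (a,n) ≠ (2,6) and such that it is not the case that n = 2 and a+1 is a power of 2, there exists a prime p dividing a^n − 1 that does not divide a^k − 1 for any 1 ≤ k < n. -/

import Mathlib

open Polynomial

lemma zsig_pow_ineq (Q p : ℕ) (hQ : 2 ≤ Q) (hp : 3 ≤ p) (hne : ¬(Q = 2 ∧ p = 3)) :
    p * (Q + 1) + 1 < Q ^ p := by
  have main : ∀ p, 4 ≤ p → ∀ Q, 2 ≤ Q → p * (Q + 1) + 1 < Q ^ p := by
    intro p hp
    induction p, hp using Nat.le_induction with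
    | base =>
      intro Q hQ
      have h4 : Q ^ 4 = Q * Q * Q * Q := by ring
      have h2 : 2 * 2 ≤ Q * Q := Nat.mul_le_mul hQ hQ
      have h3 : 2 * 2 * 2 ≤ Q * Q * Q := Nat.mul_le_mul h2 hQ
      rw [h4]
      linarith [Nat.mul_le_mul h3 (le_refl Q), hQ]
    | succ p hp ih =>
      intro Q hQ
      have h1 := ih Q hQ
      have e : Q ^ (p + 1) = Q ^ p * Q := pow_succ Q p
      have h2X : Q ^ p * 2 ≤ Q ^ p * Q := Nat.mul_le_mul_left _ hQ
      have hpq : 1 * Q ≤ p * Q := Nat.mul_le_mul_right Q (by omega)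
      nlinarith [h1, h2X, hpq, e, hQ]
  rcases Nat.lt_or_ge p 4 with h4 | h4
  · have hp3 : p = 3 := by omega
    subst hp3
    have hQ3 : 3 ≤ Q := by
      rcases Nat.lt_or_ge Q 3 with h | h
      · exfalso; exact hne ⟨by omega, rfl⟩
      · exact h
    have h3 : Q ^ 3 = Q * Q * Q := by ring
    have h9 : 3 * 3 ≤ Q * Q := Nat.mul_le_mul hQ3 hQ3
    rw [h3]
    linarith [Nat.mul_le_mul h9 (le_refl Q), hQ3]
  · exact main p h4 Q hQ

lemma zsig_odd_sq (b : ℕ) (hb : b % 2 = 1) : 8 ∣ b * b - 1 := by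
  obtain ⟨k, rfl⟩ : ∃ k, b = 2 * k + 1 := ⟨b / 2, by omega⟩
  obtain ⟨j, hj⟩ : 2 ∣ k * (k + 1) := (Nat.even_mul_succ_self k).two_dvd
  have h : (2 * k + 1) * (2 * k + 1) = 4 * (k * (k + 1)) + 1 := by ring
  rw [hj] at h
  omega

lemma zsig_tower (p m : ℕ) (hp : p.Prime) : ∀ β : ℕ, 1 ≤ β → ∀ x : ℤ,
    (cyclotomic (p ^ β * m) ℤ).eval x = (cyclotomic (p * m) ℤ).eval (x ^ p ^ (β - 1)) := by
  intro β hβ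
  induction β, hβ using Nat.le_induction with
  | base => intro x; simp [pow_one]
  | succ β hβ ih =>
    intro x
    have hdvd : p ∣ p ^ β * m := Dvd.dvd.mul_right (dvd_pow_self p (by omega)) m
    have h1 : cyclotomic (p ^ (β + 1) * m) ℤ = expand ℤ p (cyclotomic (p ^ β * m) ℤ) := by
      rw [cyclotomic_expand_eq_cyclotomic hp hdvd]
      congr 1; ring
    rw [h1, expand_eval, ih (x ^ p), ← pow_mul]
    have h2 : p * p ^ (β - 1) = p ^ (β + 1 - 1) := by
      rw [← pow_succ']
      congr 1; omega
    rw [h2]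

lemma zsig_dvd_iff (a k p : ℕ) (ha : 0 < a) (hp : p.Prime) :
    p ∣ a ^ k - 1 ↔ ((a : ZMod p)) ^ k = 1 := by
  haveI := Fact.mk hp
  have h1 : 1 ≤ a ^ k := Nat.one_le_pow _ _ ha
  rw [← ZMod.natCast_eq_zero_iff, Nat.cast_sub h1]
  push_cast
  rw [sub_eq_zero]

theorem stmt_6 (a n : ℕ) (ha : 2 ≤ a) (hn : 2 ≤ n)
    (h1 : ¬(a = 2 ∧ n = 6)) (h2 : ¬(n = 2 ∧ ∃ k : ℕ, a + 1 = 2 ^ k)) :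
    ∃ p : ℕ, p.Prime ∧ p ∣ a ^ n - 1 ∧ ∀ k : ℕ, 1 ≤ k → k < n → ¬ p ∣ a ^ k - 1 := by
  by_contra hcon
  push_neg at hcon
  have ha1 : 0 < a := by omega
  have hord_ne : ∀ p : ℕ, p.Prime → p ∣ a ^ n - 1 → orderOf ((a : ZMod p)) ≠ n := by
    intro p hp hdvd hord
    obtain ⟨k, hk1, hkn, hkdvd⟩ := hcon p hp hdvd
    have hx1 : (a : ZMod p) ^ k = 1 := (zsig_dvd_iff a k p ha1 hp).mp hkdvd
    have hx2 := orderOf_dvd_of_pow_eq_one hx1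
    rw [hord] at hx2
    have := Nat.le_of_dvd (by omega) hx2
    omega
  rcases eq_or_lt_of_le hn with hn2 | hn3
  · -- n = 2
    have hn2' : n = 2 := hn2.symm
    subst hn2'
    have hpow : ∀ k : ℕ, a + 1 ≠ 2 ^ k := fun k hk => h2 ⟨rfl, k, hk⟩
    have hne0 : a + 1 ≠ 0 := by omega
    have hex : ∃ q, q.Prime ∧ q ∣ a + 1 ∧ q ≠ 2 := by
      by_contra hq
      push_neg at hq
      exact hpow _ (Nat.eq_prime_pow_of_unique_prime_dvd hne0
        (fun {d} hd hdd => hq d hd hdd))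
    obtain ⟨q, hq, hqd, hq2⟩ := hex
    have hkey : a ^ 2 - 1 = (a + 1) * (a - 1) := by
      obtain ⟨b, rfl⟩ := Nat.exists_eq_add_of_le ha
      have h : (2 + b) ^ 2 = (2 + b + 1) * (2 + b - 1) + 1 := by
        have hb : 2 + b - 1 = 1 + b := by omega
        rw [hb]; ring
      omega
    have hqd2 : q ∣ a ^ 2 - 1 := by rw [hkey]; exact hqd.mul_right _
    obtain ⟨k, hk1, hk2, hkd⟩ := hcon q hq hqd2
    have hk : k = 1 := by omega
    subst hk
    rw [pow_one] at hkd
    have hq2' : q ∣ (a + 1) - (a - 1) := Nat.dvd_sub hqd hkd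
    have he2 : (a + 1) - (a - 1) = 2 := by omega
    rw [he2] at hq2'
    exact hq2 ((Nat.prime_dvd_prime_iff_eq hq Nat.prime_two).mp hq2')
  -- main case : 2 < n
  have hnpos : 0 < n := by omega
  have hn0 : n ≠ 0 := by omega
  have haz : (1:ℤ) < (a:ℤ) := by exact_mod_cast (by omega : 1 < a)
  set Φz : ℤ := (cyclotomic n ℤ).eval (a : ℤ) with hΦzdef
  have hΦpos : 0 < Φz := cyclotomic_pos' n haz
  set Φ : ℕ := Φz.toNat with hΦdef
  have hΦcast : (Φ : ℤ) = Φz := Int.toNat_of_nonneg hΦpos.le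
  have hΦabs : Φz.natAbs = Φ := by
    have h := Int.natAbs_of_nonneg hΦpos.le
    omega
  have hΦ2 : 2 ≤ Φ := by
    have h := sub_one_lt_natAbs_cyclotomic_eval (show 1 < n by omega) (show a ≠ 1 by omega)
    rw [← hΦzdef, hΦabs] at h
    omega
  have hΦdvdZ : Φz ∣ (a:ℤ) ^ n - 1 := by
    have h := eval_dvd (x := (a:ℤ)) (cyclotomic.dvd_X_pow_sub_one n ℤ)
    simpa using h
  have hcast1 : ∀ k : ℕ, 0 < k → ((a ^ k - 1 : ℕ) : ℤ) = (a:ℤ) ^ k - 1 := by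
    intro k hk
    have hpk : 1 ≤ a ^ k := Nat.one_le_pow _ _ ha1
    rw [Nat.cast_sub hpk]
    push_cast
    ring
  have hΦdvdN : Φ ∣ a ^ n - 1 := by
    have h : (Φ : ℤ) ∣ ((a ^ n - 1 : ℕ) : ℤ) := by
      rw [hΦcast, hcast1 n hnpos]; exact hΦdvdZ
    exact_mod_cast h
  have hroot : ∀ p : ℕ, p.Prime → p ∣ Φ → IsRoot (cyclotomic n (ZMod p)) ((a : ZMod p)) := by
    intro p hp hpΦ
    haveI := Fact.mk hp
    have h0 : ((Φz : ZMod p)) = 0 := by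
      rw [← hΦcast]
      exact_mod_cast (ZMod.natCast_eq_zero_iff Φ p).mpr hpΦ
    have h : IsRoot (cyclotomic n (ZMod p)) (((a : ℤ) : ZMod p)) := by
      rw [IsRoot.def, ← map_cyclotomic_int n (ZMod p), eval_intCast_map]
      exact_mod_cast h0
    simpa using h
  have key : ∀ p : ℕ, p.Prime → p ∣ Φ →
      p ∣ n ∧ orderOf ((a : ZMod p)) = ordCompl[p] n ∧ ordCompl[p] n ∣ p - 1 ∧ ¬ p ∣ a := by
    intro p hp hpΦ
    haveI := Fact.mk hp
    have hpn1 : p ∣ a ^ n - 1 := hpΦ.trans hΦdvdN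
    have hordn := hord_ne p hp hpn1
    have hpa : ¬ p ∣ a := by
      intro hpa
      have hd1 : p ∣ a ^ n := dvd_pow hpa hn0
      have hd2 : p ∣ a ^ n - (a ^ n - 1) := Nat.dvd_sub hd1 hpn1
      have hd3 : a ^ n - (a ^ n - 1) = 1 := by
        have : 1 ≤ a ^ n := Nat.one_le_pow _ _ ha1
        omega
      rw [hd3] at hd2
      have := Nat.dvd_one.mp hd2
      have := hp.one_lt
      omega
    have hpn : p ∣ n := by
      by_contra hpn
      haveI : NeZero ((n : ZMod p)) :=
        ⟨fun h => hpn ((ZMod.natCast_eq_zero_iff n p).mp h)⟩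
      exact hordn ((isRoot_cyclotomic_iff.mp (hroot p hp hpΦ)).eq_orderOf).symm
    have hmn : p ^ n.factorization p * ordCompl[p] n = n := Nat.ordProj_mul_ordCompl_eq_self n p
    have hpm : ¬ p ∣ ordCompl[p] n := Nat.not_dvd_ordCompl hp hn0
    haveI : NeZero (((ordCompl[p] n : ℕ) : ZMod p)) :=
      ⟨fun h => hpm ((ZMod.natCast_eq_zero_iff (ordCompl[p] n) p).mp h)⟩
    have hroot' : IsRoot (cyclotomic (p ^ n.factorization p * ordCompl[p] n) (ZMod p))
        ((a : ZMod p)) := by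
      rw [hmn]; exact hroot p hp hpΦ
    have hprim : IsPrimitiveRoot ((a : ZMod p)) (ordCompl[p] n) :=
      isRoot_cyclotomic_prime_pow_mul_iff_of_charP.mp hroot'
    have hordm : orderOf ((a : ZMod p)) = ordCompl[p] n := hprim.eq_orderOf.symm
    have hane : (a : ZMod p) ≠ 0 := fun h => hpa ((ZMod.natCast_eq_zero_iff a p).mp h)
    have hm1 : ordCompl[p] n ∣ p - 1 := by
      rw [← hordm]
      exact orderOf_dvd_of_pow_eq_one (ZMod.pow_card_sub_one_eq_one hane)
    exact ⟨hpn, hordm, hm1, hpa⟩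
  have hmax : ∀ p : ℕ, p.Prime → p ∣ Φ → ∀ q : ℕ, q.Prime → q ∣ n → q ≤ p := by
    intro p hp hpΦ q hq hqn
    obtain ⟨hpn, hordm, hm1, hpa⟩ := key p hp hpΦ
    have hmn := Nat.ordProj_mul_ordCompl_eq_self n p
    rw [← hmn] at hqn
    rcases (Nat.Prime.dvd_mul hq).mp hqn with h | h
    · have h' := hq.dvd_of_dvd_pow h
      have := (Nat.prime_dvd_prime_iff_eq hq hp).mp h'
      omega
    · have hm0 : 0 < ordCompl[p] n := Nat.ordCompl_pos p hn0
      have hle1 : q ≤ ordCompl[p] n := Nat.le_of_dvd hm0 h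
      have hle2 : ordCompl[p] n ≤ p - 1 := Nat.le_of_dvd (by have := hp.two_le; omega) hm1
      omega
  set P : ℕ := Φ.minFac with hPdef
  have hP : P.Prime := Nat.minFac_prime (by omega)
  have hPΦ : P ∣ Φ := Nat.minFac_dvd Φ
  have huniq : ∀ q : ℕ, q.Prime → q ∣ Φ → q = P := by
    intro q hq hqΦ
    have hle1 := hmax P hP hPΦ q hq (key q hq hqΦ).1
    have hle2 := hmax q hq hqΦ P hP (key P hP hPΦ).1
    omega
  have hΦpow : Φ = P ^ Φ.primeFactorsList.length :=
    Nat.eq_prime_pow_of_unique_prime_dvd (by omega) (fun {d} hd hdd => huniq d hd hdd)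
  set L : ℕ := Φ.primeFactorsList.length with hLdef
  have hL1 : 1 ≤ L := by
    by_contra h
    have hL0 : L = 0 := by omega
    rw [hL0, pow_zero] at hΦpow
    omega
  obtain ⟨hPn, hordP, hmP1, hPa⟩ := key P hP hPΦ
  set β : ℕ := n.factorization P with hβdef
  set m : ℕ := ordCompl[P] n with hmdef
  have hβ1 : 1 ≤ β := hP.factorization_pos_of_dvd hn0 hPn
  have hmn : P ^ β * m = n := Nat.ordProj_mul_ordCompl_eq_self n P
  have hm0 : 0 < m := Nat.ordCompl_pos P hn0
  have hPm : ¬ P ∣ m := Nat.not_dvd_ordCompl hP hn0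
  have hPam : P ∣ a ^ m - 1 := by
    rw [zsig_dvd_iff a m P ha1 hP, ← hordP]
    exact pow_orderOf_eq_one _
  rcases hP.eq_two_or_odd' with hP2 | hPodd
  · -- P = 2
    have hm1 : m = 1 := by
      rw [hP2] at hmP1
      norm_num at hmP1
      exact hmP1
    have hn2β : n = 2 ^ β := by rw [← hmn, hm1, hP2, mul_one]
    have hβ2 : 2 ≤ β := by
      by_contra h
      have hβe : β = 1 := by omega
      rw [hβe, pow_one] at hn2β
      omega
    have htow := zsig_tower P m hP β hβ1 (a : ℤ)
    have hΦz2 : Φz = (cyclotomic (P * m) ℤ).eval ((a:ℤ) ^ P ^ (β - 1)) := by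
      rw [hΦzdef, ← hmn]; exact htow
    set t : ℕ := 2 ^ (β - 1) with htdef
    have hΦz3 : Φz = (a:ℤ) ^ t + 1 := by
      rw [hΦz2, hP2, hm1, mul_one, cyclotomic_two, eval_add, eval_X, eval_one]
    have hΦN : Φ = a ^ t + 1 := by
      have h : (Φ:ℤ) = ((a ^ t + 1 : ℕ) : ℤ) := by rw [hΦcast, hΦz3]; push_cast; ring
      exact_mod_cast h
    have h2Φ : 2 ∣ Φ := by rw [← hP2]; exact hPΦ
    have ht0 : t ≠ 0 := by positivity
    have haodd : a % 2 = 1 := by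
      rcases Nat.even_or_odd a with he | ho
      · exfalso
        have h2t : 2 ∣ a ^ t := dvd_pow he.two_dvd ht0
        omega
      · exact Nat.odd_iff.mp ho
    have ht2 : t = 2 * 2 ^ (β - 2) := by
      rw [htdef, ← pow_succ']
      congr 1; omega
    have hbodd : (a ^ 2 ^ (β - 2)) % 2 = 1 :=
      Nat.odd_iff.mp ((Nat.odd_iff.mpr haodd).pow)
    have h8 : 8 ∣ a ^ t - 1 := by
      have h := zsig_odd_sq (a ^ 2 ^ (β - 2)) hbodd
      have hbb : a ^ 2 ^ (β - 2) * a ^ 2 ^ (β - 2) = a ^ t := by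
        rw [← pow_add]
        congr 1
        omega
      rwa [hbb] at h
    have ht2' : 2 ≤ t := by
      rw [htdef]
      calc 2 = 2 ^ 1 := rfl
      _ ≤ 2 ^ (β - 1) := Nat.pow_le_pow_right (by norm_num) (by omega)
    have h4 : 4 ≤ a ^ t := by
      calc 4 = 2 ^ 2 := by norm_num
      _ ≤ 2 ^ t := Nat.pow_le_pow_right (by norm_num) ht2'
      _ ≤ a ^ t := Nat.pow_le_pow_left ha t
    have hL3 : 2 ≤ L := by
      by_contra h
      have hΦle : Φ ≤ 2 := by
        rw [hΦpow, hP2]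
        calc 2 ^ L ≤ 2 ^ 1 := Nat.pow_le_pow_right (by norm_num) (by omega)
        _ = 2 := by norm_num
      omega
    have h4Φ : 4 ∣ Φ := by
      rw [hΦpow, hP2]
      have h := pow_dvd_pow 2 hL3
      simpa using h
    omega
  · -- P odd
    have hP3 : 3 ≤ P := by
      have := hP.two_le
      have := Nat.odd_iff.mp hPodd
      omega
    set s : ℕ := P ^ (β - 1) * m with hsdef
    have hPs : P * P ^ (β - 1) = P ^ β := by
      rw [← pow_succ']; congr 1; omega
    have hns : P * s = n := by rw [hsdef, ← mul_assoc, hPs, hmn]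
    have hs0 : 0 < s := Nat.mul_pos (Nat.pow_pos hP.pos) hm0
    have hsn : s < n := by
      have : 1 * s < P * s := by
        apply Nat.mul_lt_mul_of_lt_of_le (by omega) le_rfl hs0
      omega
    have hms : m ∣ s := dvd_mul_left m _
    have hPas : P ∣ a ^ s - 1 := by
      obtain ⟨c, hc⟩ := hms
      have hdd : a ^ m - 1 ∣ a ^ s - 1 := by
        rw [hc, pow_mul]
        simpa using Nat.sub_dvd_pow_sub_pow (a ^ m) 1 c
      exact hPam.trans hdd
    haveI := Fact.mk hP
    have has1 : 1 < a ^ s := Nat.one_lt_pow (by omega) (by omega)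
    have hPnas : ¬ P ∣ a ^ s := fun h => hPa (hP.dvd_of_dvd_pow h)
    have hval : padicValNat P (a ^ n - 1) = padicValNat P (a ^ s - 1) + 1 := by
      have h := padicValNat.pow_sub_pow (p := P) hPodd (show (1:ℕ) < a ^ s from has1)
        (by simpa using hPas) hPnas (show P ≠ 0 by omega)
      rw [one_pow, ← pow_mul, mul_comm s P, hns, padicValNat.self hP.one_lt] at h
      exact h
    have hdiv2 : ((a:ℤ) ^ s - 1) * Φz ∣ (a:ℤ) ^ n - 1 := by
      have hsprop : s ∈ n.properDivisors :=
        Nat.mem_properDivisors.mpr ⟨⟨P, by rw [mul_comm]; exact hns.symm⟩, hsn⟩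
      have h := eval_dvd (x := (a:ℤ))
        (X_pow_sub_one_mul_cyclotomic_dvd_X_pow_sub_one_of_dvd ℤ hsprop)
      simpa using h
    have hdivN : (a ^ s - 1) * Φ ∣ a ^ n - 1 := by
      rw [← Int.natCast_dvd_natCast, Nat.cast_mul, hcast1 s hs0, hcast1 n hnpos, hΦcast]
      exact hdiv2
    have hL : L = 1 := by
      by_contra hL2
      have hL2' : 2 ≤ L := by omega
      have hP2Φ : P ^ 2 ∣ Φ := by rw [hΦpow]; exact pow_dvd_pow P hL2'
      have hvdvd : P ^ padicValNat P (a ^ s - 1) ∣ a ^ s - 1 := pow_padicValNat_dvd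
      have hbig : P ^ (padicValNat P (a ^ s - 1) + 2) ∣ a ^ n - 1 := by
        have hh : P ^ (padicValNat P (a ^ s - 1) + 2) =
            P ^ padicValNat P (a ^ s - 1) * P ^ 2 := pow_add P _ 2
        rw [hh]
        exact (mul_dvd_mul hvdvd hP2Φ).trans hdivN
      have hne : a ^ n - 1 ≠ 0 := by
        have : 1 < a ^ n := Nat.one_lt_pow hn0 (by omega)
        omega
      have hfin := (Nat.Prime.pow_dvd_iff_le_factorization hP hne).mp hbig
      rw [Nat.factorization_def _ hP, hval] at hfin
      omega
    have hΦP : Φ = P := by rw [hΦpow, hL, pow_one]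
    set e : ℕ := P ^ (β - 1) with hedef
    have he1 : e ≠ 0 := by positivity
    set Q : ℕ := a ^ e with hQdef
    have hQ2 : 2 ≤ Q := by
      calc 2 ≤ a := ha
      _ ≤ a ^ e := Nat.le_self_pow he1 a
    have hQP : ¬ (Q = 2 ∧ P = 3) := by
      rintro ⟨hQ2', hP3'⟩
      have ha2 : a = 2 := by
        have := Nat.le_self_pow he1 a
        omega
      have he' : e = 1 := by
        have hq : a ^ e = 2 := by rw [← hQdef]; exact hQ2'
        rw [ha2] at hq
        have hq1 : (2:ℕ) ^ e = 2 ^ 1 := by rw [pow_one]; exact hq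
        exact Nat.pow_right_injective (by norm_num) hq1
      have hβe : β = 1 := by
        by_contra hb
        have hb1 : 1 ≤ β - 1 := by omega
        have hPe : P ≤ e := by
          calc P = P ^ 1 := (pow_one P).symm
          _ ≤ e := by rw [hedef]; exact Nat.pow_le_pow_right (by omega) hb1
        omega
      have hm2 : m = 1 ∨ m = 2 := by
        rw [hP3'] at hmP1
        norm_num at hmP1
        exact (Nat.dvd_prime Nat.prime_two).mp hmP1
      rcases hm2 with hmm | hmm
      · rw [hmm, ha2, hP3', pow_one] at hPam
        norm_num at hPam
      · have hn6 : n = 6 := by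
          rw [← hmn, hβe, hP3', hmm, pow_one]
        exact h1 ⟨ha2, hn6⟩
    have hineq := zsig_pow_ineq Q P hQ2 hP3 hQP
    have htow := zsig_tower P m hP β hβ1 (a:ℤ)
    have hΦz2 : Φz = (cyclotomic (P * m) ℤ).eval ((a:ℤ) ^ e) := by
      rw [hΦzdef, ← hmn]; exact htow
    have hexp := cyclotomic_expand_eq_cyclotomic_mul hP hPm ℤ
    have hmulz : (cyclotomic m ℤ).eval (((a:ℤ) ^ e) ^ P) =
        Φz * (cyclotomic m ℤ).eval ((a:ℤ) ^ e) := by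
      have h := congrArg (eval ((a:ℤ) ^ e)) hexp
      rw [expand_eval, eval_mul, mul_comm m P] at h
      rw [h, ← hΦz2]
    have hQzQ : (Q : ℤ) = (a:ℤ) ^ e := by rw [hQdef]; push_cast; ring
    set φm : ℕ := m.totient with hφdef
    have hφ1 : φm ≠ 0 := (Nat.totient_pos.mpr hm0).ne'
    have hQR : (1:ℝ) < (Q:ℝ) := by exact_mod_cast (by omega : 1 < Q)
    have hQPR : (1:ℝ) < (Q:ℝ) ^ P := one_lt_pow₀ hQR (by omega)
    have hQzR : (((a:ℤ) ^ e : ℤ) : ℝ) = (Q : ℝ) := by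
      rw [← hQzQ]; simp
    have hAz : (((cyclotomic m ℤ).eval ((a:ℤ) ^ e) : ℤ) : ℝ) =
        (cyclotomic m ℝ).eval ((Q:ℝ)) := by
      have h := cyclotomic.eval_apply ((a:ℤ) ^ e) m (Int.castRingHom ℝ)
      simp only [eq_intCast] at h
      rw [← h, hQzR]
    have hBz : (((cyclotomic m ℤ).eval (((a:ℤ) ^ e) ^ P) : ℤ) : ℝ) =
        (cyclotomic m ℝ).eval ((Q:ℝ) ^ P) := by
      have h := cyclotomic.eval_apply (((a:ℤ) ^ e) ^ P) m (Int.castRingHom ℝ)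
      simp only [eq_intCast] at h
      have hc : ((((a:ℤ) ^ e) ^ P : ℤ) : ℝ) = (Q:ℝ) ^ P := by
        rw [← hQzQ]
        push_cast
        ring
      rw [← h, hc]
    have hAle : (((cyclotomic m ℤ).eval ((a:ℤ) ^ e) : ℤ) : ℝ) ≤ ((Q:ℝ) + 1) ^ φm := by
      rw [hAz]
      exact cyclotomic_eval_le_add_one_pow_totient hQR m
    have hBge : ((Q:ℝ) ^ P - 1) ^ φm ≤ (((cyclotomic m ℤ).eval (((a:ℤ) ^ e) ^ P) : ℤ) : ℝ) := by
      rw [hBz]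
      exact sub_one_pow_totient_le_cyclotomic_eval hQPR m
    have hΦzP : Φz = (P : ℤ) := by rw [← hΦcast, hΦP]
    have hZ : (cyclotomic m ℤ).eval (((a:ℤ) ^ e) ^ P) =
        (P:ℤ) * (cyclotomic m ℤ).eval ((a:ℤ) ^ e) := by
      rw [hmulz, hΦzP]
    have hBA : (((cyclotomic m ℤ).eval (((a:ℤ) ^ e) ^ P) : ℤ) : ℝ) =
        (P:ℝ) * (((cyclotomic m ℤ).eval ((a:ℤ) ^ e) : ℤ) : ℝ) := by
      rw [hZ]; push_cast; ring
    have hPR1 : (1:ℝ) ≤ (P:ℝ) := by exact_mod_cast hP.one_lt.le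
    have hkeyR : (P:ℝ) * ((Q:ℝ) + 1) < (Q:ℝ) ^ P - 1 := by
      have h := hineq
      have h' : ((P * (Q + 1) + 1 : ℕ) : ℝ) < ((Q ^ P : ℕ) : ℝ) := by exact_mod_cast h
      push_cast at h'
      linarith
    have hfinal : ((Q:ℝ) ^ P - 1) ^ φm ≤ (P:ℝ) * ((Q:ℝ) + 1) ^ φm := by
      calc ((Q:ℝ) ^ P - 1) ^ φm ≤ _ := hBge
      _ = (P:ℝ) * (((cyclotomic m ℤ).eval ((a:ℤ) ^ e) : ℤ) : ℝ) := hBA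
      _ ≤ (P:ℝ) * ((Q:ℝ) + 1) ^ φm := by
        apply mul_le_mul_of_nonneg_left hAle (by positivity)
    have hgt : (P:ℝ) * ((Q:ℝ) + 1) ^ φm < ((Q:ℝ) ^ P - 1) ^ φm := by
      have hg1 : (P:ℝ) * ((Q:ℝ) + 1) ^ φm ≤ ((P:ℝ) * ((Q:ℝ) + 1)) ^ φm := by
        rw [mul_pow]
        apply mul_le_mul_of_nonneg_right (le_self_pow₀ hPR1 hφ1) (by positivity)
      have hg2 : ((P:ℝ) * ((Q:ℝ) + 1)) ^ φm < ((Q:ℝ) ^ P - 1) ^ φm := by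
        apply pow_lt_pow_left₀ hkeyR (by positivity) hφ1
      linarith
    linarith
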